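/- arXiv:1705.08553 — 4 statements merged into one kernel-verified Lean document; each statement's English description precedes it below -/
import Mathlib

section
/- Trace property of 𝔼_X^Λ: for finite X ⊆ Λ ⊆ Γ and any A ∈ 𝔄_{Λ∖X}, the element 𝔼_X^Λ(A) is a scalar multiple of the identity. Explicitly, for a monomial A = ∏_{x ∈ Λ∖X} A_x supported in Λ∖X one has 𝔼_X^Λ(A) = (∏_{x ∈ Λ∖X} c(A_x))·1, where c(1) = 1, c(a_x* a_x) = 1/2, and c(a_x) = c(a_x*) = 0. -/
open scoped Classical

/-- The canonical anticommutation relations for a family `a x` of annihilation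
operators in a C*-algebra. -/
def IsCAR {Γ A : Type*} [Ring A] [StarRing A] (a : Γ → A) : Prop :=
  (∀ x y, a x * a y + a y * a x = 0) ∧
  (∀ x y, star (a x) * star (a y) + star (a y) * star (a x) = 0) ∧
  (∀ x y, a x * star (a y) + star (a y) * a x = if x = y then (1 : A) else 0)

/-- The four possible factors of a monomial at a site `x`:
`1`, `a x`, `a x *`, and `a x * a x`. -/
def carFactor {Γ A : Type*} [Ring A] [StarRing A] (a : Γ → A) (k : Fin 4) (x : Γ) : A :=
  match k with
  | 0 => 1
  | 1 => a x
  | 2 => star (a x)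
  | 3 => star (a x) * a x

/-- The monomial with factor pattern `k` along the enumeration `l` of a finite set of sites. -/
def carMonomial {Γ A : Type*} [Ring A] [StarRing A] (a : Γ → A) (l : List Γ)
    (k : Γ → Fin 4) : A :=
  (l.map fun x => carFactor a (k x) x).prod

/-- The number of odd factors (`a x` or `a x *`) of the monomial with pattern `k` along `l`. -/
def carOddCount {Γ : Type*} (l : List Γ) (k : Γ → Fin 4) : ℕ :=
  l.countP fun x => decide (k x = 1 ∨ k x = 2)

/-- `𝔄_X`: the linear span of the monomials supported in the finite set `X`. -/
def carSpan {Γ A : Type*} [Ring A] [StarRing A] [Algebra ℂ A] (a : Γ → A) (X : Finset Γ) :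
    Submodule ℂ A :=
  Submodule.span ℂ {m | ∃ (l : List Γ) (k : Γ → Fin 4),
    l.Nodup ∧ l.toFinset = X ∧ m = carMonomial a l k}

/-- `𝔄_X⁺`: the linear span of the even monomials supported in the finite set `X`. -/
def carSpanEven {Γ A : Type*} [Ring A] [StarRing A] [Algebra ℂ A] (a : Γ → A) (X : Finset Γ) :
    Submodule ℂ A :=
  Submodule.span ℂ {m | ∃ (l : List Γ) (k : Γ → Fin 4),
    l.Nodup ∧ l.toFinset = X ∧ Even (carOddCount l k) ∧ m = carMonomial a l k}

/-- The single-site unitaries `u_x^(0) = 1`, `u_x^(1) = a_x* + a_x`, `u_x^(2) = a_x* − a_x`,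
`u_x^(3) = 1 − 2 a_x* a_x`. -/
def uFactor {Γ A : Type*} [Ring A] [StarRing A] (a : Γ → A) (k : Fin 4) (x : Γ) : A :=
  match k with
  | 0 => 1
  | 1 => star (a x) + a x
  | 2 => star (a x) - a x
  | 3 => 1 - 2 * (star (a x) * a x)

/-- The unitary `u(α) = u_{x_1}^{(α(x_1))} ⋯ u_{x_n}^{(α(x_n))}` along the enumeration `l`
of `Λ ∖ X`. -/
def uProd {Γ A : Type*} [Ring A] [StarRing A] (a : Γ → A) (l : List Γ)
    (α : Fin l.length → Fin 4) : A :=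
  (List.ofFn fun i => uFactor a (α i) (l.get i)).prod

/-- The conditional expectation `𝔼_X^Λ(B) = 4^{−|Λ∖X|} ∑_{α} u(α)* B u(α)`, where `l` is
an enumeration of `Λ ∖ X`. -/
noncomputable def condExp {Γ A : Type*} [Ring A] [StarRing A] [Algebra ℂ A] (a : Γ → A)
    (l : List Γ) (B : A) : A :=
  ((4 : ℂ) ^ l.length)⁻¹ • ∑ α : Fin l.length → Fin 4, star (uProd a l α) * B * uProd a l α

set_option linter.unusedSectionVars false
set_option maxHeartbeats 1000000

namespace CARtrace

variable {Γ A : Type*} [DecidableEq Γ] [Ring A] [StarRing A] [Algebra ℂ A] {a : Γ → A}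

lemma half (z : A) (h : z + z = 0) : z = 0 := by
  have : (2:ℂ) • z = 0 := by rw [two_smul]; exact h
  simpa using this

lemma sq_a (h : IsCAR a) (x : Γ) : a x * a x = 0 := half _ (h.1 x x)
lemma sq_s (h : IsCAR a) (x : Γ) : star (a x) * star (a x) = 0 := half _ (h.2.1 x x)
lemma mix (h : IsCAR a) (x : Γ) : a x * star (a x) = 1 - star (a x) * a x := by
  have := h.2.2 x x; rw [if_pos rfl] at this; rw [eq_sub_iff_add_eq]; exact this

lemma anti_aa (h : IsCAR a) {x y : Γ} : a x * a y = -(a y * a x) := by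
  rw [eq_neg_iff_add_eq_zero]; exact h.1 x y
lemma anti_ss (h : IsCAR a) {x y : Γ} : star (a x) * star (a y) = -(star (a y) * star (a x)) := by
  rw [eq_neg_iff_add_eq_zero]; exact h.2.1 x y
lemma anti_as (h : IsCAR a) {x y : Γ} (hxy : x ≠ y) :
    a x * star (a y) = -(star (a y) * a x) := by
  rw [eq_neg_iff_add_eq_zero]; have := h.2.2 x y; rwa [if_neg hxy] at this
lemma anti_sa (h : IsCAR a) {x y : Γ} (hxy : x ≠ y) :
    star (a x) * a y = -(a y * star (a x)) := by
  rw [eq_neg_iff_add_eq_zero]; have := h.2.2 y x; rw [if_neg (Ne.symm hxy)] at this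
  rw [add_comm]; exact this

/-- `R` commutes with the site-`x` generators. -/
def XC (a : Γ → A) (x : Γ) (R : A) : Prop :=
  a x * R = R * a x ∧ star (a x) * R = R * star (a x)
/-- `R` anticommutes with the site-`x` generators. -/
def XA (a : Γ → A) (x : Γ) (R : A) : Prop :=
  a x * R = -(R * a x) ∧ star (a x) * R = -(R * star (a x))

lemma XC.one (x : Γ) : XC a x (1 : A) := ⟨by simp, by simp⟩
lemma XC.mul_cc {x : Γ} {R S : A} (hR : XC a x R) (hS : XC a x S) : XC a x (R * S) :=
  ⟨by rw [← mul_assoc, hR.1, mul_assoc, hS.1, mul_assoc],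
   by rw [← mul_assoc, hR.2, mul_assoc, hS.2, mul_assoc]⟩
lemma XC.mul_aa {x : Γ} {R S : A} (hR : XA a x R) (hS : XA a x S) : XC a x (R * S) :=
  ⟨by rw [← mul_assoc, hR.1, neg_mul, mul_assoc, hS.1, mul_neg, neg_neg, mul_assoc],
   by rw [← mul_assoc, hR.2, neg_mul, mul_assoc, hS.2, mul_neg, neg_neg, mul_assoc]⟩
lemma XA.mul_ca {x : Γ} {R S : A} (hR : XC a x R) (hS : XA a x S) : XA a x (R * S) :=
  ⟨by rw [← mul_assoc, hR.1, mul_assoc, hS.1, mul_neg, mul_assoc],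
   by rw [← mul_assoc, hR.2, mul_assoc, hS.2, mul_neg, mul_assoc]⟩
lemma XA.mul_ac {x : Γ} {R S : A} (hR : XA a x R) (hS : XC a x S) : XA a x (R * S) :=
  ⟨by rw [← mul_assoc, hR.1, neg_mul, mul_assoc, hS.1, mul_assoc],
   by rw [← mul_assoc, hR.2, neg_mul, mul_assoc, hS.2, mul_assoc]⟩

lemma XA_a (h : IsCAR a) {x y : Γ} (hxy : x ≠ y) : XA a x (a y) :=
  ⟨anti_aa h, anti_sa h hxy⟩
lemma XA_s (h : IsCAR a) {x y : Γ} (hxy : x ≠ y) : XA a x (star (a y)) :=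
  ⟨anti_as h hxy, anti_ss h⟩

lemma factor_parity (h : IsCAR a) {x y : Γ} (hxy : x ≠ y) (q : Fin 4) :
    (¬(q = 1 ∨ q = 2) → XC a x (carFactor a q y)) ∧
    ((q = 1 ∨ q = 2) → XA a x (carFactor a q y)) := by
  fin_cases q
  · exact ⟨fun _ => XC.one x, fun hq => by simp at hq⟩
  · exact ⟨fun hq => absurd (Or.inl rfl) hq, fun _ => XA_a h hxy⟩
  · exact ⟨fun hq => absurd (Or.inr rfl) hq, fun _ => XA_s h hxy⟩
  · exact ⟨fun _ => XC.mul_aa (XA_s h hxy) (XA_a h hxy), fun hq => by simp at hq⟩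

/-- Single-site average `∑_{k<4} u_k* B u_k`. -/
noncomputable def avg4 (a : Γ → A) (x : Γ) (B : A) : A :=
  ∑ k : Fin 4, star (uFactor a k x) * B * uFactor a k x

lemma avg4_expand (x : Γ) (B : A) :
    avg4 a x B = 2*B + 2*(star (a x) * B * a x) + 2*(a x * B * star (a x))
      - 2*((star (a x) * a x) * B) - 2*(B * (star (a x) * a x))
      + 4*((star (a x) * a x) * B * (star (a x) * a x)) := by
  rw [avg4, Fin.sum_univ_four]
  simp only [uFactor, star_add, star_sub, star_one, star_mul, star_star, star_ofNat]
  noncomm_ring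

lemma avg4_even (h : IsCAR a) (x : Γ) {R : A} (hR : XC a x R) (p : Fin 4) :
    avg4 a x (carFactor a p x * R) =
      (if p = 0 then (4:A) else if p = 3 then 2 else 0) * R := by
  have h3' : a x * star (a x) = 1 - star (a x) * a x := mix h x
  have e1 : ∀ w : A, a x * (a x * w) = 0 := fun w => by rw [← mul_assoc, sq_a h, zero_mul]
  have e2 : ∀ w : A, star (a x) * (star (a x) * w) = 0 := fun w => by
    rw [← mul_assoc, sq_s h, zero_mul]
  have e3 : ∀ w : A, a x * (star (a x) * w) = w - star (a x) * (a x * w) := fun w => by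
    rw [← mul_assoc, h3', sub_mul, one_mul, mul_assoc]
  have m1 : ∀ w : A, R * (a x * w) = a x * (R * w) := fun w => by
    rw [← mul_assoc, ← hR.1, mul_assoc]
  have m2 : ∀ w : A, R * (star (a x) * w) = star (a x) * (R * w) := fun w => by
    rw [← mul_assoc, ← hR.2, mul_assoc]
  have m3 : R * a x = a x * R := hR.1.symm
  have m4 : R * star (a x) = star (a x) * R := hR.2.symm
  rw [avg4_expand]
  fin_cases p <;>
  · simp only [carFactor, one_mul, mul_one, Fin.isValue, if_true, if_false,
      Fin.mk_one, Fin.zero_eta, Fin.reduceEq, show ((⟨2,by norm_num⟩ : Fin 4) = 2) from rfl,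
      show ((⟨3,by norm_num⟩ : Fin 4) = 3) from rfl, reduceIte]
    simp only [mul_assoc, m1, m2, m3, m4, e1, e2, e3, h3', mul_one, one_mul, mul_zero,
      zero_mul, mul_sub, sub_mul, mul_add, add_mul]
    noncomm_ring

lemma avg4_odd (h : IsCAR a) (x : Γ) {R : A} (hR : XA a x R) (p : Fin 4) :
    avg4 a x (carFactor a p x * R) =
      (if p = 3 then (4 * (star (a x) * a x) - 2 : A) else 0) * R := by
  have h3' : a x * star (a x) = 1 - star (a x) * a x := mix h x
  have e1 : ∀ w : A, a x * (a x * w) = 0 := fun w => by rw [← mul_assoc, sq_a h, zero_mul]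
  have e2 : ∀ w : A, star (a x) * (star (a x) * w) = 0 := fun w => by
    rw [← mul_assoc, sq_s h, zero_mul]
  have e3 : ∀ w : A, a x * (star (a x) * w) = w - star (a x) * (a x * w) := fun w => by
    rw [← mul_assoc, h3', sub_mul, one_mul, mul_assoc]
  have m1 : ∀ w : A, R * (a x * w) = -(a x * (R * w)) := fun w => by
    rw [← mul_assoc, ← neg_neg (R * a x), ← hR.1, neg_mul, mul_assoc]
  have m2 : ∀ w : A, R * (star (a x) * w) = -(star (a x) * (R * w)) := fun w => by
    rw [← mul_assoc, ← neg_neg (R * star (a x)), ← hR.2, neg_mul, mul_assoc]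
  have m3 : R * a x = -(a x * R) := by rw [← neg_neg (R * a x), ← hR.1]
  have m4 : R * star (a x) = -(star (a x) * R) := by rw [← neg_neg (R * star (a x)), ← hR.2]
  rw [avg4_expand]
  fin_cases p <;>
  · simp only [carFactor, one_mul, mul_one, Fin.isValue, if_true, if_false,
      Fin.mk_one, Fin.zero_eta, Fin.reduceEq, show ((⟨2,by norm_num⟩ : Fin 4) = 2) from rfl,
      show ((⟨3,by norm_num⟩ : Fin 4) = 3) from rfl, reduceIte]
    simp only [mul_assoc, m1, m2, m3, m4, e1, e2, e3, h3', mul_one, one_mul, mul_zero,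
      zero_mul, mul_sub, sub_mul, mul_add, add_mul, mul_neg, neg_mul, neg_neg, neg_sub,
      neg_add, sub_neg_eq_add]
    noncomm_ring

lemma carMonomial_nil (k : Γ → Fin 4) : carMonomial a [] k = 1 := rfl
lemma carMonomial_cons (y : Γ) (t : List Γ) (k : Γ → Fin 4) :
    carMonomial a (y :: t) k = carFactor a (k y) y * carMonomial a t k := by
  simp [carMonomial]

/-- Parity commutation for monomials supported away from `x`. -/
lemma mon_parity (h : IsCAR a) (x : Γ) :
    ∀ (l : List Γ) (k : Γ → Fin 4), x ∉ l →
      (Even (carOddCount l k) → XC a x (carMonomial a l k)) ∧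
      (¬ Even (carOddCount l k) → XA a x (carMonomial a l k)) := by
  intro l
  induction l with
  | nil => intro k _; exact ⟨fun _ => by rw [carMonomial_nil]; exact XC.one x,
      fun hc => absurd (by simp [carOddCount]) hc⟩
  | cons y t ih =>
    intro k hx
    have hxy : x ≠ y := fun hc => hx (hc ▸ (List.mem_cons_self : y ∈ y :: t))
    have hxt : x ∉ t := fun hc => hx (List.mem_cons_of_mem _ hc)
    have hcount : carOddCount (y :: t) k
        = carOddCount t k + if (k y = 1 ∨ k y = 2) then 1 else 0 := by
      simp only [carOddCount, List.countP_cons]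
      by_cases hq : k y = 1 ∨ k y = 2 <;> simp [hq]
    rw [carMonomial_cons]
    by_cases hq : k y = 1 ∨ k y = 2
    · have hfac := (factor_parity h hxy (k y)).2 hq
      constructor
      · intro hev
        have : ¬ Even (carOddCount t k) := by
          rw [hcount, if_pos hq] at hev
          intro hc; exact (Nat.even_add_one.mp hev) hc
        exact XC.mul_aa hfac (((ih k hxt).2 this))
      · intro hod
        have : Even (carOddCount t k) := by
          rw [hcount, if_pos hq] at hod
          by_contra hc
          exact hod (Nat.even_add_one.mpr hc)
        exact XA.mul_ac hfac ((ih k hxt).1 this)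
    · have hfac := (factor_parity h hxy (k y)).1 hq
      rw [hcount, if_neg hq, add_zero]
      exact ⟨fun hev => XC.mul_cc hfac ((ih k hxt).1 hev),
        fun hod => XA.mul_ca hfac ((ih k hxt).2 hod)⟩

/-- Commuting elements commute with every factor. -/
lemma XC.comm_factor {x : Γ} {R : A} (hR : XC a x R) (p : Fin 4) :
    R * carFactor a p x = carFactor a p x * R := by
  fin_cases p
  · simp [carFactor]
  · exact hR.1.symm
  · exact hR.2.symm
  · show R * (star (a x) * a x) = (star (a x) * a x) * R
    rw [← mul_assoc, ← hR.2, mul_assoc, ← hR.1, mul_assoc]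

lemma XA.comm_factor_even {x : Γ} {R : A} (hR : XA a x R) {p : Fin 4} (hp : p = 0 ∨ p = 3) :
    R * carFactor a p x = carFactor a p x * R := by
  rcases hp with hp | hp <;> subst hp
  · simp [carFactor]
  · show R * (star (a x) * a x) = (star (a x) * a x) * R
    have h1 : R * star (a x) = -(star (a x) * R) := by rw [← neg_neg (R * star (a x)), ← hR.2]
    have h2 : R * a x = -(a x * R) := by rw [← neg_neg (R * a x), ← hR.1]
    rw [← mul_assoc, h1, neg_mul, mul_assoc, h2, mul_neg, neg_neg, mul_assoc]

lemma XA.comm_factor_odd {x : Γ} {R : A} (hR : XA a x R) {p : Fin 4} (hp : p = 1 ∨ p = 2) :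
    R * carFactor a p x = -(carFactor a p x * R) := by
  rcases hp with hp | hp <;> subst hp
  · show R * a x = -(a x * R); rw [← neg_neg (R * a x), ← hR.1]
  · show R * star (a x) = -(star (a x) * R); rw [← neg_neg (R * star (a x)), ← hR.2]

/-- Swap a factor at site `x` past a factor at a different site `y`. -/
lemma factor_swap (h : IsCAR a) {x y : Γ} (hxy : x ≠ y) (p q : Fin 4) :
    ∃ σ : ℂ, (σ = 1 ∨ σ = -1) ∧ ((p = 0 ∨ p = 3) → σ = 1) ∧
      carFactor a q y * carFactor a p x = σ • (carFactor a p x * carFactor a q y) := by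
  have hp4 : (p = 0 ∨ p = 3) ∨ (p = 1 ∨ p = 2) := by fin_cases p <;> simp
  by_cases hq : q = 1 ∨ q = 2
  · have hXA := (factor_parity h hxy q).2 hq
    rcases hp4 with hp | hp
    · exact ⟨1, Or.inl rfl, fun _ => rfl, by rw [one_smul, hXA.comm_factor_even hp]⟩
    · refine ⟨-1, Or.inr rfl, fun hc => ?_, ?_⟩
      · rcases hp with hp | hp <;> rcases hc with hc | hc <;> subst hp <;> simp at hc
      · rw [hXA.comm_factor_odd hp, neg_smul, one_smul]
  · have hXC := (factor_parity h hxy q).1 hq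
    exact ⟨1, Or.inl rfl, fun _ => rfl, by rw [one_smul, hXC.comm_factor p]⟩

/-- Extraction of the site-`x` factor from a monomial, up to sign. -/
lemma extract (h : IsCAR a) {x : Γ} :
    ∀ (l : List Γ) (k : Γ → Fin 4), l.Nodup → x ∈ l →
      ∃ ε : ℂ, (ε = 1 ∨ ε = -1) ∧ ((k x = 0 ∨ k x = 3) → ε = 1) ∧
        carMonomial a l k = ε • (carFactor a (k x) x * carMonomial a (l.erase x) k) := by
  intro l
  induction l with
  | nil => intro k _ hx; exact absurd hx (List.not_mem_nil : x ∉ ([] : List Γ))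
  | cons y t ih =>
    intro k hnd hx
    by_cases hxy : y = x
    · subst hxy
      refine ⟨1, Or.inl rfl, fun _ => rfl, ?_⟩
      rw [one_smul, List.erase_cons_head, carMonomial_cons]
    · have hxt : x ∈ t := by
        rcases List.mem_cons.mp hx with hc | hc
        · exact absurd hc.symm hxy
        · exact hc
      obtain ⟨ε, hε1, hεev, hM⟩ := ih k (List.nodup_cons.mp hnd).2 hxt
      obtain ⟨σ, hσ1, hσev, hswap⟩ := factor_swap h (fun hc => hxy hc.symm) (k x) (k y)
      refine ⟨ε * σ, ?_, ?_, ?_⟩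
      · rcases hε1 with h1 | h1 <;> rcases hσ1 with h2 | h2 <;> subst h1 <;> subst h2 <;> simp
      · intro hev; rw [hεev hev, hσev hev, mul_one]
      · have herase : (y :: t).erase x = y :: t.erase x := by
          rw [List.erase_cons_tail]
          simp [hxy]
        conv_lhs => rw [carMonomial_cons, hM, mul_smul_comm, ← mul_assoc, hswap,
          smul_mul_assoc, smul_smul]
        rw [herase, carMonomial_cons, mul_assoc]

lemma uProd_nil (α : Fin ([] : List Γ).length → Fin 4) : uProd a [] α = 1 := rfl

lemma uProd_cons (x : Γ) (t : List Γ) (α : Fin (t.length + 1) → Fin 4) :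
    uProd a (x :: t) α = uFactor a (α 0) x * uProd a t (fun i => α i.succ) := by
  show (List.ofFn fun i => uFactor a (α i) ((x :: t).get i)).prod = _
  rw [List.ofFn_succ, List.prod_cons]
  rfl

lemma condExp_nil (B : A) : condExp a [] B = B := by
  simp [condExp, uProd_nil]

lemma condExp_smul (l : List Γ) (c : ℂ) (B : A) :
    condExp a l (c • B) = c • condExp a l B := by
  simp only [condExp]
  rw [smul_comm]
  congr 1
  rw [Finset.smul_sum]
  exact Finset.sum_congr rfl fun α _ => by rw [mul_smul_comm, smul_mul_assoc]

lemma condExp_add (l : List Γ) (B C : A) :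
    condExp a l (B + C) = condExp a l B + condExp a l C := by
  simp only [condExp, ← smul_add]
  congr 1
  rw [← Finset.sum_add_distrib]
  exact Finset.sum_congr rfl fun α _ => by rw [mul_add, add_mul]

lemma condExp_zero (l : List Γ) : condExp a l (0 : A) = 0 := by
  simp [condExp]

lemma condExp_cons (x : Γ) (t : List Γ) (B : A) :
    condExp a (x :: t) B = (4:ℂ)⁻¹ • condExp a t (avg4 a x B) := by
  show ((4:ℂ) ^ (t.length + 1))⁻¹ • ∑ α : Fin (t.length + 1) → Fin 4,
      star (uProd a (x :: t) α) * B * uProd a (x :: t) α = _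
  have hsum : (∑ α : Fin (t.length + 1) → Fin 4,
        star (uProd a (x :: t) α) * B * uProd a (x :: t) α)
      = ∑ p : Fin 4 × (Fin t.length → Fin 4),
        star (uProd a (x :: t) (Fin.cons p.1 p.2)) * B * uProd a (x :: t) (Fin.cons p.1 p.2) := by
    refine (Fintype.sum_equiv (Fin.consEquiv (fun _ => Fin 4))
      (fun p => star (uProd a (x :: t) (Fin.cons p.1 p.2)) * B
        * uProd a (x :: t) (Fin.cons p.1 p.2))
      (fun α => star (uProd a (x :: t) α) * B * uProd a (x :: t) α)
      (fun p => rfl)).symm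
  rw [hsum, Fintype.sum_prod_type, Finset.sum_comm]
  have hterm : ∀ (β : Fin t.length → Fin 4) (kk : Fin 4),
      star (uProd a (x :: t) (Fin.cons kk β)) * B * uProd a (x :: t) (Fin.cons kk β)
      = star (uProd a t β) * (star (uFactor a kk x) * B * uFactor a kk x) * uProd a t β := by
    intro β kk
    have hcons : uProd a (x :: t) (Fin.cons kk β) = uFactor a kk x * uProd a t β := by
      rw [uProd_cons]
      congr 1
    rw [hcons, star_mul]
    noncomm_ring
  have : (∑ β : Fin t.length → Fin 4, ∑ kk : Fin 4,
        star (uProd a (x :: t) (Fin.cons kk β)) * B * uProd a (x :: t) (Fin.cons kk β))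
      = ∑ β : Fin t.length → Fin 4, star (uProd a t β) * avg4 a x B * uProd a t β := by
    refine Finset.sum_congr rfl fun β _ => ?_
    rw [avg4, Finset.mul_sum, Finset.sum_mul]
    exact Finset.sum_congr rfl fun kk _ => hterm β kk
  rw [this, condExp, smul_smul, ← mul_inv, ← pow_succ']

lemma star_uFactor (k : Fin 4) (x : Γ) :
    star (uFactor a k x) = if k = 2 then -uFactor a k x else uFactor a k x := by
  fin_cases k
  · simp [uFactor]
  · show star (star (a x) + a x) = star (a x) + a x
    rw [star_add, star_star, add_comm]
  · show star (star (a x) - a x) = -(star (a x) - a x)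
    rw [star_sub, star_star, neg_sub]
  · show star (1 - 2 * (star (a x) * a x)) = 1 - 2 * (star (a x) * a x)
    rw [star_sub, star_one, star_mul, star_mul, star_star, star_ofNat,
      (Commute.ofNat_right (star (a x) * a x) 2).eq]

lemma commute_uFactor {C : A} {y : Γ} (h1 : Commute C (a y)) (h2 : Commute C (star (a y)))
    (k : Fin 4) : Commute C (uFactor a k y) := by
  fin_cases k
  · exact Commute.one_right C
  · exact h2.add_right h1
  · exact h2.sub_right h1
  · exact (Commute.one_right C).sub_right ((Commute.ofNat_right C 2).mul_right (h2.mul_right h1))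

lemma commute_star_uFactor {C : A} {y : Γ} (h1 : Commute C (a y)) (h2 : Commute C (star (a y)))
    (k : Fin 4) : Commute C (star (uFactor a k y)) := by
  rw [star_uFactor]
  by_cases hk : k = 2
  · rw [if_pos hk]; exact (commute_uFactor h1 h2 k).neg_right
  · rw [if_neg hk]; exact commute_uFactor h1 h2 k

lemma commute_star_uProd {C : A} :
    ∀ (t : List Γ), (∀ y ∈ t, Commute C (a y) ∧ Commute C (star (a y))) →
      ∀ α : Fin t.length → Fin 4, Commute C (star (uProd a t α)) := by
  intro t
  induction t with
  | nil => intro _ α; rw [uProd_nil, star_one]; exact Commute.one_right C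
  | cons y s ih =>
    intro hC α
    rw [uProd_cons y s α, star_mul]
    have h1 := (hC y (List.mem_cons_self : y ∈ y :: s)).1
    have h2 := (hC y (List.mem_cons_self : y ∈ y :: s)).2
    exact (ih (fun z hz => hC z (List.mem_cons_of_mem _ hz)) _).mul_right
      (commute_star_uFactor h1 h2 _)

lemma condExp_mul_left {C : A} (l : List Γ)
    (hC : ∀ y ∈ l, Commute C (a y) ∧ Commute C (star (a y))) (B : A) :
    condExp a l (C * B) = C * condExp a l B := by
  simp only [condExp]
  rw [mul_smul_comm, Finset.mul_sum]
  congr 1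
  refine Finset.sum_congr rfl fun α _ => ?_
  have hc := commute_star_uProd l hC α
  have h1 : star (uProd a l α) * (C * B) * uProd a l α
      = (star (uProd a l α) * C) * (B * uProd a l α) := by noncomm_ring
  rw [h1, ← hc.eq]
  noncomm_ring

lemma uFactor_isometry (h : IsCAR a) (k : Fin 4) (x : Γ) :
    star (uFactor a k x) * uFactor a k x = 1 := by
  have h3' : a x * star (a x) = 1 - star (a x) * a x := mix h x
  have e1 : ∀ w : A, a x * (a x * w) = 0 := fun w => by rw [← mul_assoc, sq_a h, zero_mul]
  have e2 : ∀ w : A, star (a x) * (star (a x) * w) = 0 := fun w => by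
    rw [← mul_assoc, sq_s h, zero_mul]
  have e3 : ∀ w : A, a x * (star (a x) * w) = w - star (a x) * (a x * w) := fun w => by
    rw [← mul_assoc, h3', sub_mul, one_mul, mul_assoc]
  have t1 : ∀ w : A, a x * (2 * w) = 2 * (a x * w) := fun w => by
    rw [← mul_assoc, (Commute.ofNat_right (a x) 2).eq, mul_assoc]
  have t2 : ∀ w : A, star (a x) * (2 * w) = 2 * (star (a x) * w) := fun w => by
    rw [← mul_assoc, (Commute.ofNat_right (star (a x)) 2).eq, mul_assoc]
  have t3 : a x * 2 = 2 * a x := (Commute.ofNat_right (a x) 2).eq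
  have t4 : star (a x) * 2 = 2 * star (a x) := (Commute.ofNat_right (star (a x)) 2).eq
  fin_cases k <;>
  · simp only [uFactor, star_add, star_sub, star_one, star_mul, star_star, star_ofNat]
    simp only [mul_assoc, t1, t2, t3, t4, e1, e2, e3, h3', sq_a h, sq_s h, mul_one, one_mul,
      mul_zero, zero_mul, mul_sub, sub_mul, mul_add, add_mul, mul_neg, neg_mul, neg_neg]
    try noncomm_ring

lemma uProd_isometry (h : IsCAR a) :
    ∀ (t : List Γ) (α : Fin t.length → Fin 4), star (uProd a t α) * uProd a t α = 1 := by
  intro t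
  induction t with
  | nil => intro α; rw [uProd_nil, star_one, one_mul]
  | cons y s ih =>
    intro α
    rw [uProd_cons y s α, star_mul, mul_assoc,
      ← mul_assoc (star (uFactor a (α (0 : Fin (s.length+1))) y)), uFactor_isometry h, one_mul, ih]

lemma condExp_one (h : IsCAR a) (l : List Γ) : condExp a l (1 : A) = 1 := by
  simp only [condExp]
  have : ∀ α : Fin l.length → Fin 4, star (uProd a l α) * 1 * uProd a l α = 1 := fun α => by
    rw [mul_one, uProd_isometry h]
  rw [Finset.sum_congr rfl fun α _ => this α, Finset.sum_const, Finset.card_univ]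
  rw [Fintype.card_fun, Fintype.card_fin, Fintype.card_fin]
  rw [← Nat.cast_smul_eq_nsmul ℂ, smul_smul]
  push_cast
  rw [inv_mul_cancel₀ (pow_ne_zero _ (by norm_num : (4:ℂ) ≠ 0)), one_smul]

lemma map_prod_erase (f : Γ → ℂ) {x : Γ} {l : List Γ} (hx : x ∈ l) :
    (l.map f).prod = f x * ((l.erase x).map f).prod := by
  have hp := List.perm_cons_erase hx
  rw [(hp.map f).prod_eq, List.map_cons, List.prod_cons]

lemma prod_zero (k : Γ → Fin 4) {l : List Γ} (h0 : carOddCount l k ≠ 0) :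
    (l.map fun z => if k z = 0 then (1:ℂ) else if k z = 3 then 1/2 else 0).prod = 0 := by
  obtain ⟨y, hy, hpy⟩ := List.countP_pos_iff.mp (Nat.pos_of_ne_zero h0)
  have hky : k y = 1 ∨ k y = 2 := of_decide_eq_true hpy
  apply List.prod_eq_zero
  refine List.mem_map.mpr ⟨y, hy, ?_⟩
  rcases hky with hk | hk <;> rw [hk] <;> simp

lemma main_trace (h : IsCAR a) :
    ∀ (l : List Γ), l.Nodup → ∀ (l' : List Γ) (k : Γ → Fin 4), l'.Nodup →
      l'.toFinset = l.toFinset →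
      condExp a l (carMonomial a l' k)
        = ((l'.map fun z => if k z = 0 then (1:ℂ) else if k z = 3 then 1/2 else 0).prod)
            • (1 : A) := by
  intro l
  induction l with
  | nil =>
    intro _ l' k _ hset
    have hl' : l' = [] := by
      rw [← List.toFinset_eq_empty_iff]; exact hset
    subst hl'
    rw [carMonomial_nil, condExp_nil, List.map_nil, List.prod_nil, one_smul]
  | cons x t ih =>
    intro hnd l' k hl' hset
    have hxt : x ∉ t := (List.nodup_cons.mp hnd).1
    have ht : t.Nodup := (List.nodup_cons.mp hnd).2
    have hxl' : x ∈ l' := by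
      rw [← List.mem_toFinset, hset]; simp
    obtain ⟨ε, hε1, hεev, hM⟩ := extract h l' k hl' hxl'
    have hchain : condExp a (x :: t) (carMonomial a l' k)
        = ε • ((4:ℂ)⁻¹ • condExp a t
            (avg4 a x (carFactor a (k x) x * carMonomial a (l'.erase x) k))) := by
      rw [hM, condExp_smul, condExp_cons]
    set R := carMonomial a (l'.erase x) k with hRdef
    have hern : (l'.erase x).Nodup := hl'.erase x
    have hxnot : x ∉ l'.erase x := hl'.not_mem_erase
    have hfin : (l'.erase x).toFinset = t.toFinset := by
      ext y
      simp only [List.mem_toFinset, hl'.mem_erase_iff]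
      constructor
      · rintro ⟨hyx, hy⟩
        have hmem : y ∈ (x :: t).toFinset := by rw [← hset]; exact List.mem_toFinset.mpr hy
        simp only [List.toFinset_cons, Finset.mem_insert, List.mem_toFinset] at hmem
        tauto
      · intro hy
        refine ⟨fun hc => hxt (hc ▸ hy), ?_⟩
        have hmem : y ∈ l'.toFinset := by
          rw [hset]; simp only [List.toFinset_cons, Finset.mem_insert, List.mem_toFinset]
          exact Or.inr hy
        exact List.mem_toFinset.mp hmem
    have ihR := ih ht (l'.erase x) k hern hfin
    have hprod : (l'.map fun z => if k z = 0 then (1:ℂ) else if k z = 3 then 1/2 else 0).prod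
        = (if k x = 0 then (1:ℂ) else if k x = 3 then 1/2 else 0) *
          ((l'.erase x).map fun z =>
            if k z = 0 then (1:ℂ) else if k z = 3 then 1/2 else 0).prod :=
      map_prod_erase _ hxl'
    rcases Nat.even_or_odd (carOddCount (l'.erase x) k) with hev | hod
    · have hXC := (mon_parity h x (l'.erase x) k hxnot).1 hev
      rw [hchain, avg4_even h x hXC (k x)]
      have hp4 : k x = 0 ∨ k x = 3 ∨ k x = 1 ∨ k x = 2 := by
        have : ∀ p : Fin 4, p = 0 ∨ p = 3 ∨ p = 1 ∨ p = 2 := by decide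
        exact this (k x)
      rcases hp4 with h0 | h3 | h12
      · have h4A : (4:A) * R = (4:ℂ) • R := by rw [Algebra.smul_def, map_ofNat]
        rw [if_pos h0, h4A, condExp_smul, ihR, hεev (Or.inl h0), one_smul, smul_smul,
          smul_smul, hprod, if_pos h0, one_mul]
        congr 1
        ring
      · have h2A : (2:A) * R = (2:ℂ) • R := by rw [Algebra.smul_def, map_ofNat]
        have hne0 : ¬ k x = 0 := by rw [h3]; decide
        rw [if_neg hne0, if_pos h3, h2A, condExp_smul, ihR, hεev (Or.inr h3), one_smul,
          smul_smul, smul_smul, hprod, if_neg hne0, if_pos h3]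
        congr 1
        ring
      · have hne0 : ¬ k x = 0 := by rcases h12 with hc | hc <;> rw [hc] <;> decide
        have hne3 : ¬ k x = 3 := by rcases h12 with hc | hc <;> rw [hc] <;> decide
        rw [if_neg hne0, if_neg hne3, zero_mul, condExp_zero, smul_zero, smul_zero,
          hprod, if_neg hne0, if_neg hne3, zero_mul, zero_smul]
    · have hodd' : ¬ Even (carOddCount (l'.erase x) k) := Nat.not_even_iff_odd.mpr hod
      have hXA := (mon_parity h x (l'.erase x) k hxnot).2 hodd'
      rw [hchain, avg4_odd h x hXA (k x)]
      have hz : ((l'.erase x).map fun z =>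
          if k z = 0 then (1:ℂ) else if k z = 3 then 1/2 else 0).prod = 0 :=
        prod_zero k (by intro hc; rw [hc] at hod; exact (Nat.not_even_iff_odd.mpr hod) Even.zero)
      have hRHS : (l'.map fun z =>
          if k z = 0 then (1:ℂ) else if k z = 3 then 1/2 else 0).prod = 0 := by
        rw [hprod, hz, mul_zero]
      rw [hRHS, zero_smul]
      by_cases h3 : k x = 3
      · rw [if_pos h3]
        have hcomm : ∀ y ∈ t, Commute (4 * (star (a x) * a x) - 2 : A) (a y)
            ∧ Commute (4 * (star (a x) * a x) - 2 : A) (star (a y)) := by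
          intro y hy
          have hyx : y ≠ x := fun hc => hxt (hc ▸ hy)
          have hfac := (factor_parity h hyx 3).1 (by decide)
          have hn1 : Commute (star (a x) * a x : A) (a y) :=
            (show Commute (a y) (star (a x) * a x) from hfac.1).symm
          have hn2 : Commute (star (a x) * a x : A) (star (a y)) :=
            (show Commute (star (a y)) (star (a x) * a x) from hfac.2).symm
          exact ⟨((Commute.ofNat_left 4 (a y)).mul_left hn1).sub_left (Commute.ofNat_left 2 (a y)),
            ((Commute.ofNat_left 4 (star (a y))).mul_left hn2).sub_left
              (Commute.ofNat_left 2 (star (a y)))⟩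
        rw [condExp_mul_left t hcomm, ihR, hz, zero_smul, mul_zero, smul_zero, smul_zero]
      · rw [if_neg h3, zero_mul, condExp_zero, smul_zero, smul_zero]

end CARtrace

/-- trace property of `𝔼_X^Λ`: on `𝔄_{Λ∖X}` the conditional expectation is a
scalar multiple of the identity; explicitly, on a monomial supported in `Λ∖X` it equals the
product of the single-site coefficients `c(1) = 1`, `c(a* a) = 1/2`, `c(a) = c(a*) = 0`,
times the identity. -/
theorem condExp_trace_property
    {Γ A : Type*} [DecidableEq Γ]
    [NormedRing A] [StarRing A] [CStarRing A] [NormedAlgebra ℂ A]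
    (a : Γ → A) (hCAR : IsCAR a)
    (X Λ : Finset Γ) (hXΛ : X ⊆ Λ)
    (l : List Γ) (hl : l.Nodup) (hlset : l.toFinset = Λ \ X) :
    (∀ B ∈ carSpan a (Λ \ X), ∃ c : ℂ, condExp a l B = c • (1 : A)) ∧
    (∀ (l' : List Γ) (k : Γ → Fin 4), l'.Nodup → l'.toFinset = Λ \ X →
      condExp a l (carMonomial a l' k) =
        ((l'.map fun x => if k x = 0 then (1 : ℂ) else if k x = 3 then 1 / 2 else 0).prod)
          • (1 : A)) := by
  constructor
  · intro B hB
    refine Submodule.span_induction ?_ ?_ ?_ ?_ hB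
    · rintro m ⟨l'', k, hnd, hset', rfl⟩
      have hset2 : l''.toFinset = Λ \ X := by
        convert hset' using 2
      exact ⟨_, CARtrace.main_trace hCAR l hl l'' k hnd (hset2.trans hlset.symm)⟩
    · exact ⟨0, by rw [CARtrace.condExp_zero, zero_smul]⟩
    · rintro y z hy hz ⟨c1, h1⟩ ⟨c2, h2⟩
      exact ⟨c1 + c2, by rw [CARtrace.condExp_add, h1, h2, add_smul]⟩
    · rintro r y hy ⟨c, hc⟩
      exact ⟨r * c, by rw [CARtrace.condExp_smul, hc, smul_smul]⟩
  · intro l' k hl' hset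
    exact CARtrace.main_trace hCAR l hl l' k hl' (hset.trans hlset.symm)
end

section
/- Disjoint decomposition of 𝔼_X^Λ: let X, Y, Z ⊆ Λ ⊆ Γ with Λ finite, and suppose Λ∖X is the disjoint union of Λ∖Y and Λ∖Z. Then 𝔼_X^Λ = 𝔼_Y^Λ ∘ 𝔼_Z^Λ = 𝔼_Z^Λ ∘ 𝔼_Y^Λ (as linear maps on 𝔄_Λ). -/
open scoped Classical

/-! ### Auxiliary machinery -/

section Aux

variable {Γ A : Type*} [Ring A] [StarRing A]

/-- The (unnormalized) averaging sum `∑_α u(α)* B u(α)`. -/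
noncomputable def carS (a : Γ → A) (l : List Γ) (B : A) : A :=
  ∑ α : Fin l.length → Fin 4, star (uProd a l α) * B * uProd a l α

lemma condExp_eq_carS {Γ A : Type*} [Ring A] [StarRing A] [Algebra ℂ A] (a : Γ → A)
    (l : List Γ) (B : A) :
    condExp a l B = ((4 : ℂ) ^ l.length)⁻¹ • carS a l B := rfl

lemma carS_nil (a : Γ → A) (B : A) : carS a [] B = B := by
  simp [carS, uProd]

lemma uProd_cons (a : Γ → A) (x : Γ) (l : List Γ) (α : Fin (l.length + 1) → Fin 4) :
    uProd a (x :: l) α = uFactor a (α 0) x * uProd a l (fun i => α i.succ) := by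
  simp [uProd, List.ofFn_succ]

lemma carS_cons (a : Γ → A) (x : Γ) (l : List Γ) (B : A) :
    carS a (x :: l) B
      = ∑ k : Fin 4, carS a l (star (uFactor a k x) * B * uFactor a k x) := by
  have h := Equiv.sum_comp (Fin.consEquiv (fun _ : Fin (l.length + 1) => Fin 4))
    (fun α : Fin (l.length + 1) → Fin 4 => star (uProd a (x :: l) α) * B * uProd a (x :: l) α)
  show (∑ α : Fin (l.length + 1) → Fin 4, star (uProd a (x :: l) α) * B * uProd a (x :: l) α) = _
  rw [← h, Fintype.sum_prod_type]
  apply Finset.sum_congr rfl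
  intro k _
  rw [carS]
  apply Finset.sum_congr rfl
  intro β _
  have hβ : uProd a (x :: l) ((Fin.consEquiv (fun _ => Fin 4)) (k, β))
      = uFactor a k x * uProd a l β := by
    rw [show ((Fin.consEquiv (fun _ => Fin 4)) (k, β) : Fin (l.length + 1) → Fin 4)
        = Fin.cons k β from rfl, uProd_cons]
    simp [uProd]
  rw [hβ, star_mul]
  noncomm_ring

lemma carS_sum (a : Γ → A) (l : List Γ) {ι : Type*} (s : Finset ι) (f : ι → A) :
    carS a l (∑ i ∈ s, f i) = ∑ i ∈ s, carS a l (f i) := by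
  simp only [carS, Finset.mul_sum, Finset.sum_mul]
  exact Finset.sum_comm

lemma carS_smul {Γ A : Type*} [Ring A] [StarRing A] [Algebra ℂ A] (a : Γ → A)
    (l : List Γ) (c : ℂ) (B : A) : carS a l (c • B) = c • carS a l B := by
  simp [carS, Finset.smul_sum, mul_smul_comm, smul_mul_assoc]

lemma carS_append (a : Γ → A) (l1 l2 : List Γ) (B : A) :
    carS a (l1 ++ l2) B = carS a l2 (carS a l1 B) := by
  induction l1 generalizing B with
  | nil => rw [List.nil_append, carS_nil]
  | cons x t ih =>
      rw [List.cons_append, carS_cons, carS_cons]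
      rw [carS_sum]
      exact Finset.sum_congr rfl fun k _ => ih _

/-- At distinct sites, two `uFactor`s either commute or anticommute. -/
lemma uFactor_comm_or_anticomm (a : Γ → A) (hCAR : IsCAR a) {x y : Γ} (hxy : x ≠ y)
    (j k : Fin 4) :
    uFactor a j x * uFactor a k y = uFactor a k y * uFactor a j x ∨
    uFactor a j x * uFactor a k y = -(uFactor a k y * uFactor a j x) := by
  obtain ⟨h1, h2, h3⟩ := hCAR
  -- basic anticommutation between the odd generators at `x` and at `y`
  have aa : a x * a y = -(a y * a x) := by
    rw [eq_neg_iff_add_eq_zero]; exact h1 x y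
  have ss : star (a x) * star (a y) = -(star (a y) * star (a x)) := by
    rw [eq_neg_iff_add_eq_zero]; exact h2 x y
  have as : a x * star (a y) = -(star (a y) * a x) := by
    rw [eq_neg_iff_add_eq_zero]; simpa [hxy] using h3 x y
  have sa : star (a x) * a y = -(a y * star (a x)) := by
    rw [eq_neg_iff_add_eq_zero]
    have := h3 y x
    rw [if_neg (Ne.symm hxy)] at this
    rw [add_comm]; exact this
  -- any odd generator at `x` anticommutes with any odd generator at `y`
  have base : ∀ p : A, (p = a x ∨ p = star (a x)) → ∀ q : A, (q = a y ∨ q = star (a y)) →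
      p * q = -(q * p) := by
    rintro p (rfl | rfl) q (rfl | rfl) <;> assumption
  have antiAdd : ∀ p1 p2 q1 q2 : A, p1 * q1 = -(q1 * p1) → p1 * q2 = -(q2 * p1) →
      p2 * q1 = -(q1 * p2) → p2 * q2 = -(q2 * p2) →
      (p1 + p2) * (q1 + q2) = -((q1 + q2) * (p1 + p2)) := by
    intro p1 p2 q1 q2 e11 e12 e21 e22
    simp only [add_mul, mul_add, e11, e12, e21, e22]
    abel
  have antiNegL : ∀ p q : A, p * q = -(q * p) → (-p) * q = -(q * (-p)) := by
    intro p q h; simp [neg_mul, mul_neg, h]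
  have antiNegR : ∀ p q : A, p * q = -(q * p) → p * (-q) = -((-q) * p) := by
    intro p q h; simp [neg_mul, mul_neg, h]
  -- odd uFactors anticommute
  have odd : ∀ p : A, (p = star (a x) + a x ∨ p = star (a x) - a x) →
      ∀ q : A, (q = star (a y) + a y ∨ q = star (a y) - a y) → p * q = -(q * p) := by
    have b11 := base _ (Or.inr rfl) _ (Or.inr rfl)  -- sx sy
    have b12 := base _ (Or.inr rfl) _ (Or.inl rfl)  -- sx ay
    have b21 := base _ (Or.inl rfl) _ (Or.inr rfl)  -- ax sy
    have b22 := base _ (Or.inl rfl) _ (Or.inl rfl)  -- ax ay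
    rintro p (rfl | rfl) q (rfl | rfl)
    · exact antiAdd _ _ _ _ b11 b12 b21 b22
    · rw [sub_eq_add_neg]
      exact antiAdd _ _ _ _ b11 (antiNegR _ _ b12) b21 (antiNegR _ _ b22)
    · rw [sub_eq_add_neg]
      exact antiAdd _ _ _ _ b11 b12 (antiNegL _ _ b21) (antiNegL _ _ b22)
    · rw [sub_eq_add_neg, sub_eq_add_neg]
      exact antiAdd _ _ _ _ b11 (antiNegR _ _ b12) (antiNegL _ _ b21)
        (antiNegR _ _ (antiNegL _ _ b22))
  -- the even `uFactor` at `x` commutes with everything at `y`, and vice versa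
  have evenComm : ∀ p q r : A, p * r = -(r * p) → q * r = -(r * q) →
      Commute (p * q) r := by
    intro p q r hp hq
    show p * q * r = r * (p * q)
    rw [mul_assoc, hq, mul_neg, ← mul_assoc, hp, neg_mul, neg_neg, mul_assoc]
  have cxx : ∀ q : A, (q = a y ∨ q = star (a y)) → Commute (star (a x) * a x) q := by
    rintro q hq
    exact evenComm _ _ _ (base _ (Or.inr rfl) _ hq) (base _ (Or.inl rfl) _ hq)
  have cyy : ∀ p : A, (p = a x ∨ p = star (a x)) → Commute p (star (a y) * a y) := by
    rintro p hp
    exact (evenComm _ _ _ (by rw [base _ hp _ (Or.inr rfl)]; simp)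
      (by rw [base _ hp _ (Or.inl rfl)]; simp)).symm
  -- commutation of uFactor 3 at x with each uFactor at y
  have c3 : ∀ k : Fin 4, Commute (uFactor a (3 : Fin 4) x) (uFactor a k y) := by
    intro k
    have hA : Commute (1 - 2 * (star (a x) * a x)) (a y) :=
      ((Commute.one_left _).sub_left (((Commute.ofNat_left 2 _).mul_left (cxx _ (Or.inl rfl)))))
    have hS : Commute (1 - 2 * (star (a x) * a x)) (star (a y)) :=
      ((Commute.one_left _).sub_left (((Commute.ofNat_left 2 _).mul_left (cxx _ (Or.inr rfl)))))
    fin_cases k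
    · exact Commute.one_right _
    · exact hS.add_right hA
    · exact hS.sub_right hA
    · exact (Commute.one_right _).sub_right ((Commute.ofNat_right _ 2).mul_right (hS.mul_right hA))
  have c3' : ∀ j : Fin 4, Commute (uFactor a j x) (uFactor a (3 : Fin 4) y) := by
    intro j
    have hA : Commute (a x) (1 - 2 * (star (a y) * a y)) :=
      ((Commute.one_right _).sub_right (((Commute.ofNat_right _ 2).mul_right (cyy _ (Or.inl rfl)))))
    have hS : Commute (star (a x)) (1 - 2 * (star (a y) * a y)) :=
      ((Commute.one_right _).sub_right (((Commute.ofNat_right _ 2).mul_right (cyy _ (Or.inr rfl)))))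
    fin_cases j
    · exact Commute.one_left _
    · exact hS.add_left hA
    · exact hS.sub_left hA
    · exact (Commute.one_left _).sub_left ((Commute.ofNat_left 2 _).mul_left (hS.mul_left hA))
  fin_cases j <;> fin_cases k
  -- j = 0
  all_goals first
    | (left; exact (Commute.one_left _).eq)
    | (left; exact (Commute.one_right _).eq)
    | (left; exact (c3 _).eq)
    | (left; exact (c3' _).eq)
    | (right; exact odd _ (Or.inl rfl) _ (Or.inl rfl))
    | (right; exact odd _ (Or.inl rfl) _ (Or.inr rfl))
    | (right; exact odd _ (Or.inr rfl) _ (Or.inl rfl))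
    | (right; exact odd _ (Or.inr rfl) _ (Or.inr rfl))

lemma conj_conj (P Q B : A) (h : P * Q = Q * P ∨ P * Q = -(Q * P)) :
    star P * (star Q * B * Q) * P = star Q * (star P * B * P) * Q := by
  have key : star (Q * P) * B * (Q * P) = star (P * Q) * B * (P * Q) := by
    rcases h with h | h
    · rw [h]
    · rw [h]; simp [star_neg, neg_mul, mul_neg]
  simpa [star_mul, mul_assoc] using key

/-- Permutation invariance of the averaging sum. -/
lemma carS_perm (a : Γ → A) (hCAR : IsCAR a) :
    ∀ {l l' : List Γ}, l.Perm l' → l.Nodup → ∀ B, carS a l B = carS a l' B := by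
  intro l l' h
  induction h with
  | nil => intro _ B; rfl
  | cons x h ih =>
      intro hn B
      rw [carS_cons, carS_cons]
      exact Finset.sum_congr rfl fun k _ => ih (List.Nodup.of_cons hn) _
  | swap x y t =>
      intro hn B
      have hyx : y ≠ x := by
        have := (List.nodup_cons.mp hn).1
        simp only [List.mem_cons] at this
        exact fun e => this (Or.inl e)
      rw [carS_cons, carS_cons]
      simp only [carS_cons]
      rw [Finset.sum_comm]
      apply Finset.sum_congr rfl
      intro j _
      apply Finset.sum_congr rfl
      intro k _
      congr 1
      exact conj_conj _ _ _ (uFactor_comm_or_anticomm a hCAR hyx.symm j k)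
  | trans h1 h2 ih1 ih2 =>
      intro hn B
      rw [ih1 hn B, ih2 (h1.nodup_iff.mp hn) B]

end Aux

/-- disjoint decomposition of `𝔼_X^Λ`: if `Λ∖X` is the disjoint union of
`Λ∖Y` and `Λ∖Z`, then `𝔼_X^Λ = 𝔼_Y^Λ ∘ 𝔼_Z^Λ = 𝔼_Z^Λ ∘ 𝔼_Y^Λ` on `𝔄_Λ`. -/
theorem condExp_disjoint_decomposition
    {Γ A : Type*} [DecidableEq Γ]
    [NormedRing A] [StarRing A] [CStarRing A] [NormedAlgebra ℂ A]
    (a : Γ → A) (hCAR : IsCAR a)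
    (X Y Z Λ : Finset Γ) (hX : X ⊆ Λ) (hY : Y ⊆ Λ) (hZ : Z ⊆ Λ)
    (hdisj : Disjoint (Λ \ Y) (Λ \ Z)) (hunion : (Λ \ Y) ∪ (Λ \ Z) = Λ \ X)
    (lX : List Γ) (hlX : lX.Nodup) (hlXset : lX.toFinset = Λ \ X)
    (lY : List Γ) (hlY : lY.Nodup) (hlYset : lY.toFinset = Λ \ Y)
    (lZ : List Γ) (hlZ : lZ.Nodup) (hlZset : lZ.toFinset = Λ \ Z) :
    ∀ B ∈ carSpan a Λ,
      condExp a lX B = condExp a lY (condExp a lZ B) ∧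
      condExp a lX B = condExp a lZ (condExp a lY B) := by
  intro B _
  have hdisjL : lY.Disjoint lZ := by
    intro t htY htZ
    have h1 : t ∈ Λ \ Y := hlYset ▸ List.mem_toFinset.mpr htY
    have h2 : t ∈ Λ \ Z := hlZset ▸ List.mem_toFinset.mpr htZ
    exact Finset.disjoint_left.mp hdisj h1 h2
  have hnYZ : (lY ++ lZ).Nodup := hlY.append hlZ hdisjL
  have hnZY : (lZ ++ lY).Nodup := hlZ.append hlY hdisjL.symm
  have hsYZ : (lY ++ lZ).toFinset = lX.toFinset := by
    rw [hlXset, ← hunion, List.toFinset_append, hlYset, hlZset]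
  have hsZY : (lZ ++ lY).toFinset = lX.toFinset := by
    rw [hlXset, ← hunion, List.toFinset_append, hlYset, hlZset, Finset.union_comm]
  have hpYZ : lX.Perm (lY ++ lZ) :=
    List.perm_of_nodup_nodup_toFinset_eq hlX hnYZ hsYZ.symm
  have hpZY : lX.Perm (lZ ++ lY) :=
    List.perm_of_nodup_nodup_toFinset_eq hlX hnZY hsZY.symm
  have key : ∀ (l1 l2 : List Γ), lX.Perm (l1 ++ l2) →
      condExp a lX B = condExp a l2 (condExp a l1 B) := by
    intro l1 l2 hp
    rw [condExp_eq_carS, condExp_eq_carS, condExp_eq_carS, carS_smul,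
      carS_perm a hCAR hp hlX B, carS_append, smul_smul]
    congr 1
    rw [hp.length_eq, List.length_append, pow_add, mul_inv]
    ring
  exact ⟨key lZ lY hpZY, key lY lZ hpYZ⟩
end

section
/- Intersection property of the conditional expectations: for any finite Λ ⊆ Γ and any X, Y ⊆ Λ, one has 𝔼_X^Λ ∘ 𝔼_Y^Λ = 𝔼_{X∩Y}^Λ (as linear maps on 𝔄_Λ). -/
open scoped Classical

namespace CondExpAux

def kmul (j k : Fin 4) : Fin 4 :=
  match j, k with
  | 0, k => k
  | 1, 0 => 1 | 1, 1 => 0 | 1, 2 => 3 | 1, 3 => 2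
  | 2, 0 => 2 | 2, 1 => 3 | 2, 2 => 0 | 2, 3 => 1
  | 3, 0 => 3 | 3, 1 => 2 | 3, 2 => 1 | 3, 3 => 0

lemma kmul_bij : ∀ j : Fin 4, Function.Bijective (fun k => kmul k j) := by decide

variable {Γ A : Type*} [Ring A] [StarRing A] [Algebra ℂ A]
variable {a : Γ → A}

lemma sq_zero (hCAR : IsCAR a) (x : Γ) : a x * a x = 0 := by
  have h : (2:ℂ) • (a x * a x) = 0 := by rw [two_smul]; exact hCAR.1 x x
  exact (smul_eq_zero.mp h).resolve_left (by norm_num)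

lemma star_sq_zero (hCAR : IsCAR a) (x : Γ) : star (a x) * star (a x) = 0 := by
  have := congrArg star (sq_zero hCAR x)
  simpa [star_mul] using this

lemma mul_star_self (hCAR : IsCAR a) (x : Γ) :
    a x * star (a x) = 1 - star (a x) * a x := by
  have h := hCAR.2.2 x x
  rw [if_pos rfl] at h
  exact eq_sub_of_add_eq h

/-- same-site products -/
lemma uu (hCAR : IsCAR a) (x : Γ) (j k : Fin 4) :
    uFactor a j x * uFactor a k x = uFactor a (kmul j k) x ∨
    uFactor a j x * uFactor a k x = -uFactor a (kmul j k) x := by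
  have htt : a x * a x = 0 := sq_zero hCAR x
  have hss : star (a x) * star (a x) = 0 := star_sq_zero hCAR x
  have hts : a x * star (a x) = 1 - star (a x) * a x := mul_star_self hCAR x
  have htt' : ∀ w, a x * (a x * w) = 0 := fun w => by rw [← mul_assoc, htt, zero_mul]
  have hss' : ∀ w, star (a x) * (star (a x) * w) = 0 := fun w => by
    rw [← mul_assoc, hss, zero_mul]
  have hts' : ∀ w, a x * (star (a x) * w) = w - star (a x) * (a x * w) := fun w => by
    rw [← mul_assoc, hts, sub_mul, one_mul, mul_assoc]
  fin_cases j <;> fin_cases k <;>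
    (first
      | (left
         simp only [uFactor, kmul, mul_add, add_mul, mul_sub, sub_mul, mul_assoc,
           htt, hss, hts, htt', hss', hts', one_mul, mul_one, mul_zero, zero_mul]
         all_goals (try noncomm_ring)
         all_goals ((try simp only [htt, hss, hts, htt', hss', hts', mul_add, mul_sub,
           mul_zero, zero_mul, smul_zero, neg_zero, add_zero, zero_add, mul_one]); abel1))
      | (right
         simp only [uFactor, kmul, mul_add, add_mul, mul_sub, sub_mul, mul_assoc,
           htt, hss, hts, htt', hss', hts', one_mul, mul_one, mul_zero, zero_mul]
         all_goals (try noncomm_ring)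
         all_goals ((try simp only [htt, hss, hts, htt', hss', hts', mul_add, mul_sub,
           mul_zero, zero_mul, smul_zero, neg_zero, add_zero, zero_add, mul_one]); abel1)))


variable {Γ A : Type*} [Ring A] [StarRing A] [Algebra ℂ A] {a : Γ → A}

/-- cross-site products commute up to sign -/
lemma uswap (hCAR : IsCAR a) {x y : Γ} (hxy : x ≠ y) (j k : Fin 4) :
    uFactor a k y * uFactor a j x = uFactor a j x * uFactor a k y ∨
    uFactor a k y * uFactor a j x = -(uFactor a j x * uFactor a k y) := by
  have A1 : a y * a x = -(a x * a y) := eq_neg_of_add_eq_zero_left (hCAR.1 y x)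
  have A2 : star (a y) * star (a x) = -(star (a x) * star (a y)) :=
    eq_neg_of_add_eq_zero_left (hCAR.2.1 y x)
  have A3 : a y * star (a x) = -(star (a x) * a y) := by
    have h := hCAR.2.2 y x
    rw [if_neg (Ne.symm hxy)] at h
    exact eq_neg_of_add_eq_zero_left h
  have A4 : star (a y) * a x = -(a x * star (a y)) := by
    have h := hCAR.2.2 x y
    rw [if_neg hxy] at h
    exact eq_neg_of_add_eq_zero_right h
  have mv : ∀ p q : A, p * q = -(q * p) → ∀ w, p * (q * w) = -(q * (p * w)) :=
    fun p q h w => by rw [← mul_assoc, h, neg_mul, mul_assoc]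
  have A1' := mv _ _ A1
  have A2' := mv _ _ A2
  have A3' := mv _ _ A3
  have A4' := mv _ _ A4
  fin_cases j <;> fin_cases k <;>
    (first
      | (left
         simp only [uFactor, mul_add, add_mul, mul_sub, sub_mul, mul_assoc,
           A1, A2, A3, A4, A1', A2', A3', A4', one_mul, mul_one, mul_neg, neg_mul,
           neg_neg, mul_zero, zero_mul, two_mul]
         all_goals (try noncomm_ring)
         all_goals ((try simp only [A1, A2, A3, A4, A1', A2', A3', A4', mul_neg,
           neg_mul, neg_neg, mul_add, mul_sub, mul_one, two_mul]); abel1))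
      | (right
         simp only [uFactor, mul_add, add_mul, mul_sub, sub_mul, mul_assoc,
           A1, A2, A3, A4, A1', A2', A3', A4', one_mul, mul_one, mul_neg, neg_mul,
           neg_neg, mul_zero, zero_mul, two_mul]
         all_goals (try noncomm_ring)
         all_goals ((try simp only [A1, A2, A3, A4, A1', A2', A3', A4', mul_neg,
           neg_mul, neg_neg, mul_add, mul_sub, mul_one, two_mul]); abel1)))


variable {Γ A : Type*} [Ring A] [StarRing A] [Algebra ℂ A]

/-- unnormalized single-site averaging -/
def carS (a : Γ → A) (x : Γ) (B : A) : A :=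
  ∑ k : Fin 4, star (uFactor a k x) * B * uFactor a k x

lemma conj_eq_of_pm {v w B : A} (h : w = v ∨ w = -v) :
    star w * B * w = star v * B * v := by
  rcases h with h | h <;> subst h <;> simp [star_neg, neg_mul, mul_neg]

variable {a : Γ → A}

lemma carS_smul (x : Γ) (c : ℂ) (B : A) : carS a x (c • B) = c • carS a x B := by
  simp [carS, Finset.smul_sum, mul_smul_comm, smul_mul_assoc]

lemma carS_carS_self (hCAR : IsCAR a) (x : Γ) (B : A) :
    carS a x (carS a x B) = (4:ℂ) • carS a x B := by
  have expand : carS a x (carS a x B) =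
      ∑ j : Fin 4, ∑ k : Fin 4,
        star (uFactor a k x * uFactor a j x) * B * (uFactor a k x * uFactor a j x) := by
    simp [carS, Finset.mul_sum, Finset.sum_mul, star_mul, mul_assoc]
  rw [expand]
  have step : ∀ j : Fin 4,
      (∑ k : Fin 4, star (uFactor a k x * uFactor a j x) * B *
        (uFactor a k x * uFactor a j x)) = carS a x B := by
    intro j
    have h1 : ∀ k : Fin 4,
        star (uFactor a k x * uFactor a j x) * B * (uFactor a k x * uFactor a j x) =
        star (uFactor a (kmul k j) x) * B * uFactor a (kmul k j) x := fun k =>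
      conj_eq_of_pm (uu hCAR x k j)
    rw [Finset.sum_congr rfl fun k _ => h1 k]
    exact Fintype.sum_bijective _ (kmul_bij j)
      (fun k => star (uFactor a (kmul k j) x) * B * uFactor a (kmul k j) x)
      (fun m => star (uFactor a m x) * B * uFactor a m x) (fun k => rfl)
  rw [Finset.sum_congr rfl fun j _ => step j, Finset.sum_const]
  simp only [Finset.card_univ, Fintype.card_fin]
  rw [← Nat.cast_smul_eq_nsmul ℂ]
  norm_num

lemma carS_comm (hCAR : IsCAR a) (x y : Γ) (B : A) :
    carS a x (carS a y B) = carS a y (carS a x B) := by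
  by_cases hxy : x = y
  · subst hxy; rfl
  have expand : ∀ (p q : Γ), carS a p (carS a q B) =
      ∑ j : Fin 4, ∑ k : Fin 4,
        star (uFactor a k q * uFactor a j p) * B * (uFactor a k q * uFactor a j p) := by
    intro p q
    simp [carS, Finset.mul_sum, Finset.sum_mul, star_mul, mul_assoc]
  rw [expand, expand, Finset.sum_comm]
  refine Finset.sum_congr rfl fun k _ => Finset.sum_congr rfl fun j _ => ?_
  exact conj_eq_of_pm (uswap hCAR hxy j k)


variable {Γ A : Type*} [Ring A] [StarRing A] [Algebra ℂ A]

/-- unnormalized sum -/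
def carG (a : Γ → A) (l : List Γ) (B : A) : A :=
  ∑ α : Fin l.length → Fin 4, star (uProd a l α) * B * uProd a l α

lemma condExp_eq_carG (a : Γ → A) (l : List Γ) (B : A) :
    condExp a l B = ((4 : ℂ) ^ l.length)⁻¹ • carG a l B := rfl

variable {a : Γ → A}

lemma uProd_cons (x : Γ) (l : List Γ) (α : Fin (l.length + 1) → Fin 4) :
    uProd a (x :: l) α = uFactor a (α 0) x * uProd a l (fun i => α i.succ) := by
  simp [uProd, List.ofFn_succ]

lemma carG_cons (x : Γ) (l : List Γ) (B : A) :
    carG a (x :: l) B = carG a l (carS a x B) := by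
  set φ : Fin 4 × (Fin l.length → Fin 4) → (Fin (l.length + 1) → Fin 4) :=
    fun p => Fin.cons p.1 p.2 with hφ
  have hbij : Function.Bijective φ := by
    constructor
    · rintro ⟨k, α⟩ ⟨k', α'⟩ h
      simp only [hφ] at h
      have h0 : k = k' := by
        have := congrFun h 0
        simpa using this
      have h1 : α = α' := by
        funext i
        have := congrFun h i.succ
        simpa using this
      simp [h0, h1]
    · intro β
      exact ⟨(β 0, Fin.tail β), Fin.cons_self_tail β⟩
  have hterm : ∀ p : Fin 4 × (Fin l.length → Fin 4),
      star (uProd a (x :: l) (φ p)) * B * uProd a (x :: l) (φ p) =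
      star (uProd a l p.2) * (star (uFactor a p.1 x) * B * uFactor a p.1 x) * uProd a l p.2 := by
    rintro ⟨k, α⟩
    show star (uProd a (x :: l) (Fin.cons k α)) * B * uProd a (x :: l) (Fin.cons k α) = _
    rw [uProd_cons]
    simp only [Fin.cons_zero, Fin.cons_succ, star_mul, mul_assoc]
  calc carG a (x :: l) B
      = ∑ p : Fin 4 × (Fin l.length → Fin 4),
          star (uProd a l p.2) * (star (uFactor a p.1 x) * B * uFactor a p.1 x) * uProd a l p.2 :=
        (Fintype.sum_bijective φ hbij _
          (fun β : Fin (l.length + 1) → Fin 4 =>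
            star (uProd a (x :: l) β) * B * uProd a (x :: l) β)
          (fun p => (hterm p).symm)).symm
    _ = ∑ k : Fin 4, ∑ α : Fin l.length → Fin 4,
          star (uProd a l α) * (star (uFactor a k x) * B * uFactor a k x) * uProd a l α :=
        Fintype.sum_prod_type' fun k α =>
          star (uProd a l α) * (star (uFactor a k x) * B * uFactor a k x) * uProd a l α
    _ = ∑ α : Fin l.length → Fin 4, ∑ k : Fin 4,
          star (uProd a l α) * (star (uFactor a k x) * B * uFactor a k x) * uProd a l α :=
        Finset.sum_comm
    _ = ∑ α : Fin l.length → Fin 4, star (uProd a l α) * carS a x B * uProd a l α := by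
        refine Finset.sum_congr rfl fun α _ => ?_
        simp only [carS, Finset.mul_sum, Finset.sum_mul]
    _ = carG a l (carS a x B) := rfl

lemma carG_eq_foldl (a : Γ → A) : ∀ (l : List Γ) (B : A),
    carG a l B = l.foldl (fun C x => carS a x C) B := by
  intro l
  induction l with
  | nil => intro B; simp [carG, uProd]
  | cons x l ih => intro B; rw [carG_cons, List.foldl_cons, ih (carS a x B)]


variable {Γ A : Type*} [DecidableEq Γ] [Ring A] [StarRing A] [Algebra ℂ A] {a : Γ → A}

lemma foldl_smul (l : List Γ) (c : ℂ) (B : A) :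
    l.foldl (fun C x => carS a x C) (c • B) = c • l.foldl (fun C x => carS a x C) B := by
  induction l generalizing B with
  | nil => rfl
  | cons x l ih => simp only [List.foldl_cons, carS_smul, ih]

lemma foldl_reduce (hCAR : IsCAR a) :
    ∀ (n : ℕ) (l1 l2 : List Γ), l1.length = n → l2.Nodup → l1.toFinset = l2.toFinset →
    ∀ B : A, l1.foldl (fun C x => carS a x C) B =
      ((4:ℂ) ^ (l1.length - l2.length)) • l2.foldl (fun C x => carS a x C) B := by
  intro n
  induction n using Nat.strong_induction_on with
  | _ n ih =>
    intro l1 l2 hlen h2 hset B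
    haveI : RightCommutative (fun (C : A) (x : Γ) => carS a x C) :=
      ⟨fun b x y => carS_comm hCAR y x b⟩
    by_cases h1 : l1.Nodup
    · have hperm : l1.Perm l2 := List.perm_of_nodup_nodup_toFinset_eq h1 h2 hset
      rw [hperm.length_eq, Nat.sub_self, pow_zero, one_smul]
      exact hperm.foldl_eq B
    · obtain ⟨x, hx⟩ : ∃ x, 2 ≤ l1.count x := by
        by_contra hcon
        push_neg at hcon
        exact h1 (List.nodup_iff_count_le_one.mpr fun y => by have := hcon y; omega)
      have hxmem : x ∈ l1 := List.count_pos_iff.mp (by omega)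
      have hxmem2 : x ∈ l1.erase x := by
        rw [← List.count_pos_iff, List.count_erase_self]
        omega
      have hperm : l1.Perm (x :: x :: (l1.erase x).erase x) :=
        (List.perm_cons_erase hxmem).trans ((List.perm_cons_erase hxmem2).cons x)
      set rest := (l1.erase x).erase x with hrest
      have hlen1 : l1.length = rest.length + 2 := by
        rw [hperm.length_eq]; simp
      have hset2 : (x :: rest).toFinset = l2.toFinset := by
        rw [← hset, List.toFinset_eq_of_perm _ _ hperm]
        simp [List.toFinset_cons]
      have hcard : l2.length ≤ rest.length + 1 := by
        have h3 := List.toFinset_card_le (x :: rest)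
        rw [hset2, List.toFinset_card_of_nodup h2] at h3
        simpa using h3
      have ihres := ih (rest.length + 1) (by omega) (x :: rest) l2 (by simp) h2 hset2 B
      have step1 : l1.foldl (fun C x => carS a x C) B =
          (x :: x :: rest).foldl (fun C x => carS a x C) B := hperm.foldl_eq B
      have step2 : (x :: x :: rest).foldl (fun C x => carS a x C) B =
          (4:ℂ) • (x :: rest).foldl (fun C x => carS a x C) B := by
        simp only [List.foldl_cons]
        rw [carS_carS_self hCAR, ← foldl_smul]
      rw [step1, step2, ihres, smul_smul]
      congr 1
      rw [← pow_succ']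
      congr 1
      simp only [List.length_cons] at *
      omega

end CondExpAux

open CondExpAux

/-- intersection property of the conditional expectations:
`𝔼_X^Λ ∘ 𝔼_Y^Λ = 𝔼_{X∩Y}^Λ` on `𝔄_Λ`. -/
theorem condExp_intersection
    {Γ A : Type*} [DecidableEq Γ]
    [NormedRing A] [StarRing A] [CStarRing A] [NormedAlgebra ℂ A]
    (a : Γ → A) (hCAR : IsCAR a)
    (X Y Λ : Finset Γ) (hX : X ⊆ Λ) (hY : Y ⊆ Λ)
    (lX : List Γ) (hlX : lX.Nodup) (hlXset : lX.toFinset = Λ \ X)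
    (lY : List Γ) (hlY : lY.Nodup) (hlYset : lY.toFinset = Λ \ Y)
    (lXY : List Γ) (hlXY : lXY.Nodup) (hlXYset : lXY.toFinset = Λ \ (X ∩ Y)) :
    ∀ B ∈ carSpan a Λ, condExp a lX (condExp a lY B) = condExp a lXY B := by
  intro B _
  have hsets : (lY ++ lX).toFinset = lXY.toFinset := by
    rw [List.toFinset_append, hlXset, hlYset, hlXYset, Finset.sdiff_inter_distrib_right,
      Finset.union_comm]
  have hle : lXY.length ≤ lY.length + lX.length := by
    have h1 : lXY.length = ((lY ++ lX).toFinset).card := by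
      rw [hsets, List.toFinset_card_of_nodup hlXY]
    have h2 := List.toFinset_card_le (lY ++ lX)
    rw [← h1] at h2
    simpa [List.length_append] using h2
  rw [condExp_eq_carG, condExp_eq_carG, condExp_eq_carG, carG_eq_foldl, carG_eq_foldl,
    carG_eq_foldl, foldl_smul, ← List.foldl_append,
    foldl_reduce hCAR (lY ++ lX).length (lY ++ lX) lXY rfl hlXY hsets B,
    smul_smul, smul_smul]
  congr 1
  have h4 : (4:ℂ) ≠ 0 := by norm_num
  have hlen : (lY ++ lX).length = lY.length + lX.length := List.length_append
  rw [hlen, pow_sub₀ _ h4 hle, pow_add]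
  field_simp
end

section
/- Weighted F-functions: let (Γ, d) be a countable metric space, F an F-function on (Γ, d) with constants ‖F‖ and C, and f : [0,∞) → [0,∞) a non-decreasing subadditive function (f(r+s) ≤ f(r) + f(s) for all r, s ≥ 0). Then F_f(r) := e^{−f(r)} F(r) is again an F-function on (Γ, d), with ‖F_f‖ ≤ ‖F‖ and convolution constant C_f ≤ C. -/
/-- weighted F-functions: if `F` is an F-function on the countable metric
space `(Γ, d)` with constants `‖F‖` and `C`, and `f : [0,∞) → [0,∞)` is non-decreasing and
subadditive, then `F_f(r) = e^{−f(r)} F(r)` is again an F-function, with `‖F_f‖ ≤ ‖F‖` and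
convolution constant `C_f ≤ C`. -/
theorem weighted_F_function
    {Γ : Type*} [MetricSpace Γ] [Countable Γ]
    (F : ℝ → ℝ)
    (hFpos : ∀ r, 0 ≤ r → 0 < F r)
    (hFmono : ∀ r s, 0 ≤ r → r ≤ s → F s ≤ F r)
    -- (iv) uniform integrability, with `‖F‖ = normF`
    (normF : ℝ)
    (hFsummable : ∀ x : Γ, Summable fun y : Γ => F (dist x y))
    (hFnorm : ∀ x : Γ, ∑' y : Γ, F (dist x y) ≤ normF)
    -- (v) the convolution condition, with constant `C`
    (C : ℝ)
    (hCsummable : ∀ x y : Γ,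
      Summable fun z : Γ => F (dist x z) * F (dist z y) / F (dist x y))
    (hC : ∀ x y : Γ, ∑' z : Γ, F (dist x z) * F (dist z y) / F (dist x y) ≤ C)
    -- the non-decreasing subadditive weight `f`
    (f : ℝ → ℝ)
    (hf0 : ∀ r, 0 ≤ r → 0 ≤ f r)
    (hfmono : ∀ r s, 0 ≤ r → r ≤ s → f r ≤ f s)
    (hfsub : ∀ r s, 0 ≤ r → 0 ≤ s → f (r + s) ≤ f r + f s) :
    letI Ff : ℝ → ℝ := fun r => Real.exp (-f r) * F r
    (∀ r, 0 ≤ r → 0 < Ff r) ∧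
    (∀ r s, 0 ≤ r → r ≤ s → Ff s ≤ Ff r) ∧
    (∀ x : Γ, Summable (fun y : Γ => Ff (dist x y)) ∧
      ∑' y : Γ, Ff (dist x y) ≤ normF) ∧
    (∀ x y : Γ, Summable (fun z : Γ => Ff (dist x z) * Ff (dist z y) / Ff (dist x y)) ∧
      ∑' z : Γ, Ff (dist x z) * Ff (dist z y) / Ff (dist x y) ≤ C) := by
  set Ff : ℝ → ℝ := fun r => Real.exp (-f r) * F r with hFfdef
  have hFfpos : ∀ r, 0 ≤ r → 0 < Ff r := fun r hr =>
    mul_pos (Real.exp_pos _) (hFpos r hr)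
  have hFfle : ∀ r, 0 ≤ r → Ff r ≤ F r := by
    intro r hr
    have h1 : Real.exp (-f r) ≤ 1 := by
      rw [Real.exp_le_one_iff]
      linarith [hf0 r hr]
    calc Ff r ≤ 1 * F r := mul_le_mul_of_nonneg_right h1 (hFpos r hr).le
    _ = F r := one_mul _
  -- convolution term comparison
  have key : ∀ x y z : Γ,
      Ff (dist x z) * Ff (dist z y) / Ff (dist x y)
        ≤ F (dist x z) * F (dist z y) / F (dist x y) := by
    intro x y z
    have ha := dist_nonneg (x := x) (y := z)
    have hb := dist_nonneg (x := z) (y := y)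
    have hc := dist_nonneg (x := x) (y := y)
    have hfc : f (dist x y) ≤ f (dist x z) + f (dist z y) :=
      le_trans (hfmono _ _ hc (dist_triangle x z y))
        (hfsub _ _ ha hb)
    have hexp : Real.exp (-f (dist x z)) * Real.exp (-f (dist z y)) /
        Real.exp (-f (dist x y)) ≤ 1 := by
      rw [← Real.exp_add, ← Real.exp_sub, Real.exp_le_one_iff]
      linarith
    have hFc := hFpos _ hc
    have hexpc := Real.exp_pos (-f (dist x y))
    have : Ff (dist x z) * Ff (dist z y) / Ff (dist x y)
        = (Real.exp (-f (dist x z)) * Real.exp (-f (dist z y)) /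
            Real.exp (-f (dist x y))) * (F (dist x z) * F (dist z y) / F (dist x y)) := by
      simp only [hFfdef]
      field_simp
    rw [this]
    have hFterm : 0 ≤ F (dist x z) * F (dist z y) / F (dist x y) :=
      div_nonneg (mul_nonneg (hFpos _ ha).le (hFpos _ hb).le) hFc.le
    calc _ ≤ 1 * (F (dist x z) * F (dist z y) / F (dist x y)) :=
          mul_le_mul_of_nonneg_right hexp hFterm
      _ = _ := one_mul _
  have keynn : ∀ x y z : Γ, 0 ≤ Ff (dist x z) * Ff (dist z y) / Ff (dist x y) := by
    intro x y z
    exact div_nonneg (mul_nonneg (hFfpos _ dist_nonneg).le (hFfpos _ dist_nonneg).le)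
      (hFfpos _ dist_nonneg).le
  refine ⟨hFfpos, ?_, ?_, ?_⟩
  · intro r s hr hrs
    have hs : 0 ≤ s := le_trans hr hrs
    exact mul_le_mul (by
        apply Real.exp_le_exp.mpr
        simp only [neg_le_neg_iff]
        exact hfmono r s hr hrs)
      (hFmono r s hr hrs) (hFpos s hs).le (Real.exp_pos _).le
  · intro x
    have hsum : Summable (fun y : Γ => Ff (dist x y)) :=
      Summable.of_nonneg_of_le (fun y => (hFfpos _ dist_nonneg).le)
        (fun y => hFfle _ dist_nonneg) (hFsummable x)
    exact ⟨hsum, le_trans (Summable.tsum_le_tsum (fun y => hFfle _ dist_nonneg) hsum (hFsummable x))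
      (hFnorm x)⟩
  · intro x y
    have hsum : Summable (fun z : Γ => Ff (dist x z) * Ff (dist z y) / Ff (dist x y)) :=
      Summable.of_nonneg_of_le (keynn x y) (key x y) (hCsummable x y)
    exact ⟨hsum, le_trans (Summable.tsum_le_tsum (key x y) hsum (hCsummable x y)) (hC x y)⟩
end
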